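/- There exists an absolute constant C > 0 such that for every δ ∈ (0,1) and every natural number n, (1/A_n^δ) · ∫_{Γ₁} u1 · | Σ_{k=0}^{n} A_{n−k}^{δ−1} · D*_k(u1,u2) | du1 du2 ≤ C/(n+1), where Γ₁ = {(u1,u2) ∈ Γ : u1 ≤ 1/(n+1)}. -/

import Mathlib

open MeasureTheory Finset

/-- The triangle `Γ = {(u₁,u₂) : 0 ≤ u₂ ≤ u₁/3, 0 ≤ u₁ ≤ 1}`. -/
def GammaT : Set (ℝ × ℝ) := {u | 0 ≤ u.2 ∧ u.2 ≤ u.1 / 3 ∧ 0 ≤ u.1 ∧ u.1 ≤ 1}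

open Finset in
/-- Cesàro numbers: `A_n^δ = (δ+1)(δ+2)⋯(δ+n)/n!`, with `A_0^δ = 1`. -/
noncomputable def cesaroA (δ : ℝ) (n : ℕ) : ℝ :=
  (∏ i ∈ Finset.range n, (δ + i + 1)) / n.factorial

/-- The transformed hexagonal Dirichlet kernel `D*_k`. -/
noncomputable def DstarK (k : ℕ) (u : ℝ × ℝ) : ℝ :=
  (Real.sin (((k : ℝ) + 1) * Real.pi * u.2) *
      Real.sin (((k : ℝ) + 1) * Real.pi * (u.1 + u.2) / 2) *
      Real.sin (((k : ℝ) + 1) * Real.pi * (u.1 - u.2) / 2) -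
    Real.sin ((k : ℝ) * Real.pi * u.2) *
      Real.sin ((k : ℝ) * Real.pi * (u.1 + u.2) / 2) *
      Real.sin ((k : ℝ) * Real.pi * (u.1 - u.2) / 2)) /
    (Real.sin (Real.pi * u.2) * Real.sin (Real.pi * (u.1 + u.2) / 2) *
      Real.sin (Real.pi * (u.1 - u.2) / 2))

section Helpers
open Real

lemma abs_sin_nat_mul (n : ℕ) (x : ℝ) : |Real.sin (n * x)| ≤ n * |Real.sin x| := by
  induction n with
  | zero => simp
  | succ m ih =>
    have e : ((m + 1 : ℕ) : ℝ) * x = (m : ℝ) * x + x := by push_cast; ring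
    rw [e, Real.sin_add]
    calc |Real.sin ((m:ℝ)*x) * Real.cos x + Real.cos ((m:ℝ)*x) * Real.sin x|
        ≤ |Real.sin ((m:ℝ)*x) * Real.cos x| + |Real.cos ((m:ℝ)*x) * Real.sin x| := abs_add_le _ _
      _ ≤ |Real.sin ((m:ℝ)*x)| * 1 + 1 * |Real.sin x| := by
          rw [abs_mul, abs_mul]
          exact add_le_add
            (mul_le_mul_of_nonneg_left (Real.abs_cos_le_one x) (abs_nonneg _))
            (mul_le_mul_of_nonneg_right (Real.abs_cos_le_one _) (abs_nonneg _))
      _ ≤ (m:ℝ) * |Real.sin x| + 1 * |Real.sin x| := by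
          rw [mul_one]; exact add_le_add ih le_rfl
      _ = ((m + 1 : ℕ) : ℝ) * |Real.sin x| := by push_cast; ring

lemma abs_sin_sub_sin (x y : ℝ) : |Real.sin x - Real.sin y| ≤ |x - y| := by
  rw [Real.sin_sub_sin]
  calc |2 * Real.sin ((x - y)/2) * Real.cos ((x + y)/2)|
      = 2 * |Real.sin ((x-y)/2)| * |Real.cos ((x+y)/2)| := by
        rw [abs_mul, abs_mul, abs_two]
    _ ≤ 2 * |(x-y)/2| * 1 := by
        have h1 : |Real.sin ((x-y)/2)| ≤ |(x-y)/2| := Real.abs_sin_le_abs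
        have h2 := Real.abs_cos_le_one ((x+y)/2)
        nlinarith [abs_nonneg ((x-y)/2), abs_nonneg (Real.cos ((x+y)/2)),
          abs_nonneg (Real.sin ((x-y)/2))]
    _ = |x - y| := by rw [abs_div, abs_two]; ring

lemma le_three_sin {x : ℝ} (h0 : 0 ≤ x) (h1 : x ≤ 2 * π / 3) : x ≤ 3 * Real.sin x := by
  have hπ0 : 0 < π := Real.pi_pos
  rcases le_or_gt x (π / 2) with h | h
  · have h4 : 2 * x ≤ Real.sin x * π := by
      have := Real.mul_le_sin h0 h
      rw [div_mul_eq_mul_div, div_le_iff₀ hπ0] at this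
      exact this
    have hπ : π ≤ 4 := Real.pi_le_four
    nlinarith
  · have h2 : Real.sin x = Real.cos (x - π/2) := by
      rw [show x - π/2 = -(π/2 - x) by ring, Real.cos_neg, Real.cos_pi_div_two_sub]
    have h3 : 1 - (x - π/2)^2/2 ≤ Real.cos (x - π/2) := Real.one_sub_sq_div_two_le_cos
    have hπ : π ≤ 3.15 := by linarith [Real.pi_lt_d2.le]
    have hπ' : (3.14 : ℝ) ≤ π := by linarith [Real.pi_gt_d6.le]
    nlinarith [sq_nonneg (x - π/2)]

lemma cesaroA_pos {δ : ℝ} (hδ : -1 < δ) (n : ℕ) : 0 < cesaroA δ n := by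
  apply div_pos
  · exact Finset.prod_pos fun i _ => by
      have : (0:ℝ) ≤ i := Nat.cast_nonneg i
      linarith
  · exact_mod_cast n.factorial_pos

lemma cesaroA_succ (δ : ℝ) (n : ℕ) :
    cesaroA δ (n + 1) = cesaroA δ n + cesaroA (δ - 1) (n + 1) := by
  unfold cesaroA
  have h1 : ∏ i ∈ range (n+1), (δ - 1 + i + 1) = (∏ i ∈ range n, (δ + i + 1)) * δ := by
    rw [Finset.prod_range_succ']
    congr 1
    · exact Finset.prod_congr rfl fun i _ => by push_cast; ring
    · push_cast; ring
  rw [h1, Finset.prod_range_succ, Nat.factorial_succ]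
  have hf : ((n.factorial : ℝ)) ≠ 0 := by exact_mod_cast n.factorial_pos.ne'
  have hn : ((n:ℝ) + 1) ≠ 0 := by positivity
  push_cast
  field_simp
  ring

lemma cesaroA_sum (δ : ℝ) (n : ℕ) :
    ∑ j ∈ range (n + 1), cesaroA (δ - 1) j = cesaroA δ n := by
  induction n with
  | zero => simp [cesaroA]
  | succ m ih => rw [Finset.sum_range_succ, ih, ← cesaroA_succ]

lemma tri_bound (k : ℕ) {a b c : ℝ} (ha0 : 0 < a) (ha1 : a ≤ 2 * π / 3)
    (hb0 : 0 < b) (hb1 : b ≤ 2 * π / 3) (hc0 : 0 < c) (hc1 : c ≤ 2 * π / 3) :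
    |(Real.sin (((k : ℝ) + 1) * a) * Real.sin (((k : ℝ) + 1) * b) *
        Real.sin (((k : ℝ) + 1) * c) -
      Real.sin ((k : ℝ) * a) * Real.sin ((k : ℝ) * b) * Real.sin ((k : ℝ) * c)) /
      (Real.sin a * Real.sin b * Real.sin c)| ≤ 9 * ((k : ℝ) + 1) ^ 2 := by
  have hπ : 0 < π := Real.pi_pos
  have hsa : 0 < Real.sin a := Real.sin_pos_of_pos_of_lt_pi ha0 (by linarith)
  have hsb : 0 < Real.sin b := Real.sin_pos_of_pos_of_lt_pi hb0 (by linarith)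
  have hsc : 0 < Real.sin c := Real.sin_pos_of_pos_of_lt_pi hc0 (by linarith)
  have hD : 0 < Real.sin a * Real.sin b * Real.sin c := by positivity
  rw [abs_div, abs_of_pos hD, div_le_iff₀ hD]
  set kr : ℝ := (k : ℝ) with hkr
  have hkr0 : 0 ≤ kr := Nat.cast_nonneg k
  set A1 := Real.sin ((kr + 1) * a) with hA1
  set B1 := Real.sin ((kr + 1) * b) with hB1
  set C1 := Real.sin ((kr + 1) * c) with hC1
  set A0 := Real.sin (kr * a) with hA0
  set B0 := Real.sin (kr * b) with hB0
  set C0 := Real.sin (kr * c) with hC0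
  have hd1 : |A1 - A0| ≤ 3 * Real.sin a := by
    refine le_trans ?_ (le_three_sin ha0.le ha1)
    have := abs_sin_sub_sin ((kr + 1) * a) (kr * a)
    have e : (kr + 1) * a - kr * a = a := by ring
    rw [e, abs_of_pos ha0] at this
    exact this
  have hd2 : |B1 - B0| ≤ 3 * Real.sin b := by
    refine le_trans ?_ (le_three_sin hb0.le hb1)
    have := abs_sin_sub_sin ((kr + 1) * b) (kr * b)
    have e : (kr + 1) * b - kr * b = b := by ring
    rw [e, abs_of_pos hb0] at this
    exact this
  have hd3 : |C1 - C0| ≤ 3 * Real.sin c := by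
    refine le_trans ?_ (le_three_sin hc0.le hc1)
    have := abs_sin_sub_sin ((kr + 1) * c) (kr * c)
    have e : (kr + 1) * c - kr * c = c := by ring
    rw [e, abs_of_pos hc0] at this
    exact this
  have hB1' : |B1| ≤ (kr + 1) * Real.sin b := by
    have := abs_sin_nat_mul (k + 1) b
    push_cast at this
    rw [abs_of_pos hsb] at this
    exact this
  have hC1' : |C1| ≤ (kr + 1) * Real.sin c := by
    have := abs_sin_nat_mul (k + 1) c
    push_cast at this
    rw [abs_of_pos hsc] at this
    exact this
  have hA0' : |A0| ≤ kr * Real.sin a := by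
    have := abs_sin_nat_mul k a
    rw [abs_of_pos hsa] at this
    exact this
  have hB0' : |B0| ≤ kr * Real.sin b := by
    have := abs_sin_nat_mul k b
    rw [abs_of_pos hsb] at this
    exact this
  have n1 : (0:ℝ) ≤ 3 * Real.sin a := by linarith
  have n2 : (0:ℝ) ≤ (kr + 1) * Real.sin b := by positivity
  have n3 : (0:ℝ) ≤ kr * Real.sin a := by positivity
  have n4 : (0:ℝ) ≤ 3 * Real.sin b := by linarith
  have n5 : (0:ℝ) ≤ kr * Real.sin b := by positivity
  have hT1 : |(A1 - A0) * B1 * C1| ≤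
      3 * Real.sin a * ((kr + 1) * Real.sin b) * ((kr + 1) * Real.sin c) := by
    rw [abs_mul, abs_mul]
    exact mul_le_mul (mul_le_mul hd1 hB1' (abs_nonneg _) n1) hC1' (abs_nonneg _)
      (mul_nonneg n1 n2)
  have hT2 : |A0 * (B1 - B0) * C1| ≤
      kr * Real.sin a * (3 * Real.sin b) * ((kr + 1) * Real.sin c) := by
    rw [abs_mul, abs_mul]
    exact mul_le_mul (mul_le_mul hA0' hd2 (abs_nonneg _) n3) hC1' (abs_nonneg _)
      (mul_nonneg n3 n4)
  have hT3 : |A0 * B0 * (C1 - C0)| ≤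
      kr * Real.sin a * (kr * Real.sin b) * (3 * Real.sin c) := by
    rw [abs_mul, abs_mul]
    exact mul_le_mul (mul_le_mul hA0' hB0' (abs_nonneg _) n3) hd3 (abs_nonneg _)
      (mul_nonneg n3 n5)
  calc |A1 * B1 * C1 - A0 * B0 * C0|
      = |(A1 - A0) * B1 * C1 + A0 * (B1 - B0) * C1 + A0 * B0 * (C1 - C0)| := by ring_nf
    _ ≤ |(A1 - A0) * B1 * C1| + |A0 * (B1 - B0) * C1| + |A0 * B0 * (C1 - C0)| :=
        abs_add_three _ _ _
    _ ≤ 3 * Real.sin a * ((kr + 1) * Real.sin b) * ((kr + 1) * Real.sin c)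
        + kr * Real.sin a * (3 * Real.sin b) * ((kr + 1) * Real.sin c)
        + kr * Real.sin a * (kr * Real.sin b) * (3 * Real.sin c) :=
        add_le_add (add_le_add hT1 hT2) hT3
    _ = (3 * (kr + 1) ^ 2 + 3 * kr * (kr + 1) + 3 * kr ^ 2) *
        (Real.sin a * Real.sin b * Real.sin c) := by ring
    _ ≤ 9 * (kr + 1) ^ 2 * (Real.sin a * Real.sin b * Real.sin c) := by
        apply mul_le_mul_of_nonneg_right _ hD.le
        nlinarith

lemma abs_DstarK_le (k : ℕ) {u : ℝ × ℝ} (hu : u ∈ GammaT) :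
    |DstarK k u| ≤ 9 * ((k : ℝ) + 1) ^ 2 := by
  obtain ⟨h2, h23, h10, h11⟩ := hu
  rcases eq_or_lt_of_le h2 with h0 | h0
  · rw [DstarK, ← h0]
    simp
    positivity
  have hπ : 0 < π := Real.pi_pos
  have hu1 : 3 * u.2 ≤ u.1 := by linarith
  have ha0 : 0 < π * u.2 := by positivity
  have ha1 : π * u.2 ≤ 2 * π / 3 := by nlinarith
  have hb0 : 0 < π * (u.1 + u.2) / 2 := by positivity
  have hb1 : π * (u.1 + u.2) / 2 ≤ 2 * π / 3 := by nlinarith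
  have hc0 : 0 < π * (u.1 - u.2) / 2 := by nlinarith
  have hc1 : π * (u.1 - u.2) / 2 ≤ 2 * π / 3 := by nlinarith
  have h := tri_bound k ha0 ha1 hb0 hb1 hc0 hc1
  rw [DstarK]
  rw [show ((k:ℝ) + 1) * π * u.2 = ((k:ℝ) + 1) * (π * u.2) by ring,
    show ((k:ℝ) + 1) * π * (u.1 + u.2) / 2 = ((k:ℝ) + 1) * (π * (u.1 + u.2) / 2) by ring,
    show ((k:ℝ) + 1) * π * (u.1 - u.2) / 2 = ((k:ℝ) + 1) * (π * (u.1 - u.2) / 2) by ring,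
    show (k:ℝ) * π * u.2 = (k:ℝ) * (π * u.2) by ring,
    show (k:ℝ) * π * (u.1 + u.2) / 2 = (k:ℝ) * (π * (u.1 + u.2) / 2) by ring,
    show (k:ℝ) * π * (u.1 - u.2) / 2 = (k:ℝ) * (π * (u.1 - u.2) / 2) by ring]
  exact h

lemma measurable_DstarK (k : ℕ) : Measurable (DstarK k) := by
  unfold DstarK
  fun_prop

lemma measurableSet_GammaT : MeasurableSet GammaT := by
  have : GammaT = {u : ℝ × ℝ | 0 ≤ u.2} ∩ ({u | u.2 ≤ u.1 / 3} ∩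
      ({u | 0 ≤ u.1} ∩ {u | u.1 ≤ 1})) := by
    ext u; simp [GammaT, and_assoc]
  rw [this]
  exact (measurableSet_le measurable_const measurable_snd).inter
    ((measurableSet_le measurable_snd (measurable_fst.div_const 3)).inter
      ((measurableSet_le measurable_const measurable_fst).inter
        (measurableSet_le measurable_fst measurable_const)))


end Helpers
theorem stmt_15 :
    ∃ C : ℝ, 0 < C ∧
      ∀ δ : ℝ, 0 < δ → δ < 1 → ∀ n : ℕ,
        (1 / cesaroA δ n) *
            ∫ u in GammaT ∩ {u : ℝ × ℝ | u.1 ≤ 1 / ((n : ℝ) + 1)},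
              u.1 * |∑ k ∈ Finset.range (n + 1), cesaroA (δ - 1) (n - k) * DstarK k u| ≤
          C / ((n : ℝ) + 1) := by
  refine ⟨3, by norm_num, fun δ hδ0 hδ1 n => ?_⟩
  set b : ℝ := 1 / ((n : ℝ) + 1) with hb_def
  have hn1 : (0:ℝ) < (n : ℝ) + 1 := by positivity
  have hb0 : 0 < b := by positivity
  have hb1 : b ≤ 1 := by
    rw [hb_def, div_le_one hn1]; linarith [Nat.cast_nonneg (α := ℝ) n]
  set A : ℝ := cesaroA δ n with hA_def
  have hA : 0 < A := cesaroA_pos (by linarith) n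
  set S : Set (ℝ × ℝ) := GammaT ∩ {u : ℝ × ℝ | u.1 ≤ b} with hS_def
  set K : ℝ := b * (9 * ((n : ℝ) + 1) ^ 2 * A) with hK_def
  have hK0 : 0 ≤ K := by positivity
  -- pointwise bound
  have hpt : ∀ u ∈ S, u.1 * |∑ k ∈ Finset.range (n + 1),
      cesaroA (δ - 1) (n - k) * DstarK k u| ≤ K := by
    rintro u ⟨huG, huB⟩
    have hsum : |∑ k ∈ Finset.range (n + 1), cesaroA (δ - 1) (n - k) * DstarK k u| ≤
        9 * ((n : ℝ) + 1) ^ 2 * A := by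
      calc |∑ k ∈ Finset.range (n + 1), cesaroA (δ - 1) (n - k) * DstarK k u|
          ≤ ∑ k ∈ Finset.range (n + 1), |cesaroA (δ - 1) (n - k) * DstarK k u| :=
            Finset.abs_sum_le_sum_abs _ _
        _ ≤ ∑ k ∈ Finset.range (n + 1), cesaroA (δ - 1) (n - k) * (9 * ((n : ℝ) + 1) ^ 2) := by
            refine Finset.sum_le_sum fun k hk => ?_
            have hc : 0 < cesaroA (δ - 1) (n - k) := cesaroA_pos (by linarith) _
            rw [abs_mul, abs_of_pos hc]
            refine mul_le_mul_of_nonneg_left ?_ hc.le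
            refine (abs_DstarK_le k huG).trans ?_
            have hk' : (k : ℝ) ≤ n := by
              exact_mod_cast Nat.le_of_lt_succ (Finset.mem_range.mp hk)
            have : (0:ℝ) ≤ (k:ℝ) := Nat.cast_nonneg k
            nlinarith
        _ = (∑ k ∈ Finset.range (n + 1), cesaroA (δ - 1) (n - k)) * (9 * ((n : ℝ) + 1) ^ 2) := by
            rw [Finset.sum_mul]
        _ = A * (9 * ((n : ℝ) + 1) ^ 2) := by
            congr 1
            rw [hA_def, ← cesaroA_sum δ n]
            exact Finset.sum_range_reflect (fun j => cesaroA (δ - 1) j) (n + 1)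
        _ = 9 * ((n : ℝ) + 1) ^ 2 * A := by ring
    have hu1b : u.1 ≤ b := huB
    have hu10 : 0 ≤ u.1 := huG.2.2.1
    calc u.1 * |∑ k ∈ Finset.range (n + 1), cesaroA (δ - 1) (n - k) * DstarK k u|
        ≤ b * (9 * ((n : ℝ) + 1) ^ 2 * A) :=
          mul_le_mul hu1b hsum (abs_nonneg _) hb0.le
      _ = K := rfl
  -- measure of S
  have hSsub : S ⊆ Set.Icc (0, 0) (b, b / 3) := by
    rintro u ⟨⟨h1, h2, h3, h4⟩, h5⟩
    have h5' : u.1 ≤ b := h5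
    exact ⟨⟨h3, h1⟩, ⟨h5', by dsimp only; linarith⟩⟩
  have hvol : volume S ≤ ENNReal.ofReal b * ENNReal.ofReal (b / 3) := by
    calc volume S ≤ volume (Set.Icc ((0:ℝ), (0:ℝ)) (b, b / 3)) := measure_mono hSsub
      _ = ENNReal.ofReal b * ENNReal.ofReal (b / 3) := by
          rw [Set.Icc_prod_eq, Measure.volume_eq_prod, Measure.prod_prod, Real.volume_Icc,
            Real.volume_Icc]
          norm_num
  have hvolne : volume S ≠ ⊤ :=
    (hvol.trans_lt (by exact ENNReal.mul_lt_top ENNReal.ofReal_lt_top ENNReal.ofReal_lt_top)).ne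
  have hmS : MeasurableSet S :=
    measurableSet_GammaT.inter (measurableSet_le measurable_fst measurable_const)
  -- integrability
  set f : ℝ × ℝ → ℝ := fun u =>
    u.1 * |∑ k ∈ Finset.range (n + 1), cesaroA (δ - 1) (n - k) * DstarK k u| with hf_def
  have hfmeas : Measurable f := by
    apply Measurable.mul measurable_fst
    apply Measurable.abs
    exact Finset.measurable_sum _ fun k _ => (measurable_DstarK k).const_mul _
  have hbdd : ∀ᵐ u ∂(volume.restrict S), ‖f u‖ ≤ K := by
    refine ae_restrict_of_forall_mem hmS fun u hu => ?_
    have h0 : 0 ≤ u.1 := hu.1.2.2.1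
    rw [Real.norm_eq_abs, abs_of_nonneg (mul_nonneg h0 (abs_nonneg _))]
    exact hpt u hu
  have hInt : IntegrableOn f S volume :=
    Measure.integrableOn_of_bounded hvolne hfmeas.aestronglyMeasurable hbdd
  have hle : ∫ u in S, f u ≤ ∫ _u in S, K :=
    setIntegral_mono_on hInt (integrableOn_const hvolne) hmS hpt
  rw [setIntegral_const, smul_eq_mul] at hle
  have htoReal : (volume S).toReal ≤ b * (b / 3) := by
    have h1 : (ENNReal.ofReal b * ENNReal.ofReal (b / 3)) ≠ ⊤ :=
      (ENNReal.mul_lt_top ENNReal.ofReal_lt_top ENNReal.ofReal_lt_top).ne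
    have h2 := (ENNReal.toReal_le_toReal hvolne h1).2 hvol
    rwa [ENNReal.toReal_mul, ENNReal.toReal_ofReal hb0.le,
      ENNReal.toReal_ofReal (by positivity)] at h2
  have hle2 : ∫ u in S, f u ≤ b * (b / 3) * K :=
    hle.trans (mul_le_mul_of_nonneg_right htoReal hK0)
  calc (1 / A) * ∫ u in S, f u
      ≤ (1 / A) * (b * (b / 3) * K) :=
        mul_le_mul_of_nonneg_left hle2 (by positivity)
    _ = 3 / ((n : ℝ) + 1) := by
        rw [hK_def, hb_def, hA_def]
        have hA' : cesaroA δ n ≠ 0 := hA.ne'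
        field_simp
        ring
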